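/- In a Priestley space, if F and G are closed subsets such that the upset of F and the downset of G are disjoint, then there exists a clopen upset U with F ⊆ U and G disjoint from U. -/
import Mathlib


/-- In a Priestley space (compact ordered space with the Priestley separation axiom),
if `F` and `G` are closed subsets such that `↑F ∩ ↓G = ∅`, then there is a clopen
upset `U` with `F ⊆ U` and `G ∩ U = ∅`. -/
theorem priestley_separation_of_closed
    {X : Type*} [TopologicalSpace X] [PartialOrder X] [CompactSpace X]
    (hpries : ∀ x y : X, ¬ x ≤ y →
      ∃ U : Set X, IsClopen U ∧ IsUpperSet U ∧ x ∈ U ∧ y ∉ U)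
    (F G : Set X) (hF : IsClosed F) (hG : IsClosed G)
    (hdisj : {x : X | ∃ s ∈ F, s ≤ x} ∩ {x : X | ∃ s ∈ G, x ≤ s} = ∅) :
    ∃ U : Set X, IsClopen U ∧ IsUpperSet U ∧ F ⊆ U ∧ G ∩ U = ∅ := by
  classical
  have hnle : ∀ x ∈ F, ∀ y ∈ G, ¬ x ≤ y := by
    intro x hx y hy hxy
    have : x ∈ ({x : X | ∃ s ∈ F, s ≤ x} ∩ {x : X | ∃ s ∈ G, x ≤ s}) :=
      ⟨⟨x, hx, le_refl x⟩, ⟨y, hy, hxy⟩⟩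
    rw [hdisj] at this
    exact this
  -- Step 1: for each x ∈ F, a clopen upset containing x and disjoint from G.
  have step1 : ∀ x ∈ F, ∃ U : Set X, IsClopen U ∧ IsUpperSet U ∧ x ∈ U ∧ G ∩ U = ∅ := by
    intro x hx
    have hU : ∀ y : X, ∃ U : Set X, IsClopen U ∧ IsUpperSet U ∧ x ∈ U ∧ (y ∈ G → y ∉ U) := by
      intro y
      by_cases hy : y ∈ G
      · obtain ⟨U, h1, h2, h3, h4⟩ := hpries x y (hnle x hx y hy)
        exact ⟨U, h1, h2, h3, fun _ => h4⟩
      · exact ⟨Set.univ, isClopen_univ, isUpperSet_univ, trivial, fun h => absurd h hy⟩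
    choose U hUc hUu hxU hGU using hU
    have hcover : G ⊆ ⋃ y ∈ G, (U y)ᶜ := by
      intro y hy
      exact Set.mem_biUnion hy (hGU y hy)
    obtain ⟨t, ht⟩ := hG.isCompact.elim_finite_subcover_image
      (fun y _ => (hUc y).compl.isOpen) hcover
    obtain ⟨htG, htfin, hsub⟩ := ht
    refine ⟨⋂ y ∈ t, U y, ?_, ?_, ?_, ?_⟩
    · exact htfin.isClopen_biInter (fun y _ => hUc y)
    · exact isUpperSet_iInter₂ (fun y _ => hUu y)
    · exact Set.mem_iInter₂.2 (fun y _ => hxU y)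
    · ext g
      simp only [Set.mem_inter_iff, Set.mem_empty_iff_false, iff_false, not_and]
      intro hg hmem
      obtain ⟨y, hyt, hgy⟩ := Set.mem_iUnion₂.1 (hsub hg)
      exact hgy (Set.mem_iInter₂.1 hmem y hyt)
  -- Step 2: cover F by finitely many such sets.
  have hV : ∀ x : X, ∃ V : Set X, IsClopen V ∧ IsUpperSet V ∧ (x ∈ F → x ∈ V) ∧ G ∩ V = ∅ := by
    intro x
    by_cases hx : x ∈ F
    · obtain ⟨V, h1, h2, h3, h4⟩ := step1 x hx
      exact ⟨V, h1, h2, fun _ => h3, h4⟩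
    · exact ⟨∅, isClopen_empty, isUpperSet_empty, fun h => absurd h hx, Set.inter_empty _⟩
  choose V hVc hVu hxV hGV using hV
  have hcover : F ⊆ ⋃ x ∈ F, V x := fun x hx => Set.mem_biUnion hx (hxV x hx)
  obtain ⟨s, hsF, hsfin, hsub⟩ := hF.isCompact.elim_finite_subcover_image
    (fun x _ => (hVc x).isOpen) hcover
  refine ⟨⋃ x ∈ s, V x, ?_, ?_, hsub, ?_⟩
  · exact hsfin.isClopen_biUnion (fun x _ => hVc x)
  · exact isUpperSet_iUnion₂ (fun x _ => hVu x)
  · ext g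
    simp only [Set.mem_inter_iff, Set.mem_empty_iff_false, iff_false, not_and]
    intro hg hmem
    obtain ⟨x, _, hgx⟩ := Set.mem_iUnion₂.1 hmem
    have : g ∈ G ∩ V x := ⟨hg, hgx⟩
    rw [hGV x] at this
    exact this
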